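/- Let t < s < d be integers with s^2 > dt and let T = {0,1,...,t}. Then the vector chromatic number of the generalized Kneser graph K(d,s,T) is at most d(s-t)/(s^2 - dt). -/

import Mathlib

/-- The generalized Kneser graph `K(d, s, T)`. -/
def kneser (d s : ℕ) (T : Set ℕ) : SimpleGraph {A : Finset (Fin d) // A.card = s} where
  Adj A B := A ≠ B ∧ (A.1 ∩ B.1).card ∈ T
  symm := ⟨fun A B h => ⟨h.1.symm, by rw [Finset.inter_comm]; exact h.2⟩⟩
  loopless := ⟨fun A h => h.1 rfl⟩

/-- The vector chromatic number of a graph `G`: the infimum over `κ > 1` such that each vertex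
can be assigned a unit vector with `⟪w u, w v⟫ ≤ -1/(κ-1)` for every edge `{u, v}`. -/
noncomputable def vectorChromaticNumber {V : Type*} (G : SimpleGraph V) : ℝ :=
  sInf {κ : ℝ | 1 < κ ∧ ∃ (m : ℕ) (w : V → EuclideanSpace ℝ (Fin m)),
    (∀ v, ‖w v‖ = 1) ∧ ∀ u v : V, G.Adj u v → (inner ℝ (w u) (w v) : ℝ) ≤ -(1 / (κ - 1))}

lemma sum_centered {d : ℕ} (A B : Finset (Fin d)) (k : ℝ) :
    ∑ i : Fin d, ((if i ∈ A then (1:ℝ) else 0) - k) * ((if i ∈ B then (1:ℝ) else 0) - k)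
      = (A ∩ B).card - k * A.card - k * B.card + d * k ^ 2 := by
  have e : ∀ i : Fin d, ((if i ∈ A then (1:ℝ) else 0) - k) * ((if i ∈ B then (1:ℝ) else 0) - k)
      = (if i ∈ A ∩ B then (1:ℝ) else 0) - k * (if i ∈ A then (1:ℝ) else 0)
        - k * (if i ∈ B then (1:ℝ) else 0) + k ^ 2 := by
    intro i
    by_cases ha : i ∈ A <;> by_cases hb : i ∈ B <;>
      simp [Finset.mem_inter, ha, hb] <;> ring
  simp_rw [e]
  rw [Finset.sum_add_distrib, Finset.sum_sub_distrib, Finset.sum_sub_distrib,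
    ← Finset.mul_sum, ← Finset.mul_sum]
  simp [Finset.sum_ite_mem, mul_comm, ← Finset.mem_inter, Finset.filter_mem_eq_inter]

/-- For `t < s < d` with `s² > d·t` and `T = {0, 1, …, t}`, the vector chromatic number of
`K(d, s, T)` is at most `d(s - t)/(s² - d·t)`. -/
theorem vectorChromaticNumber_kneser_le (d s t : ℕ) (hts : t < s) (hsd : s < d)
    (h : d * t < s ^ 2) :
    vectorChromaticNumber (kneser d s {i : ℕ | i ≤ t}) ≤
      ((d : ℝ) * ((s : ℝ) - (t : ℝ))) / ((s : ℝ) ^ 2 - (d : ℝ) * (t : ℝ)) := by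
  have hsn : 0 < s := lt_of_le_of_lt (Nat.zero_le t) hts
  have hS : (0:ℝ) < (s:ℝ) := by exact_mod_cast hsn
  have hD : (0:ℝ) < (d:ℝ) := by exact_mod_cast lt_trans hsn hsd
  have hDS : (0:ℝ) < (d:ℝ) - (s:ℝ) := sub_pos.2 (by exact_mod_cast hsd)
  have hP : (0:ℝ) < (s:ℝ)^2 - (d:ℝ)*(t:ℝ) := sub_pos.2 (by exact_mod_cast h)
  set κ : ℝ := ((d : ℝ) * ((s : ℝ) - (t : ℝ))) / ((s : ℝ) ^ 2 - (d : ℝ) * (t : ℝ)) with hκdef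
  have hκ1 : κ - 1 = (s:ℝ) * ((d:ℝ) - (s:ℝ)) / ((s:ℝ)^2 - (d:ℝ)*(t:ℝ)) := by
    rw [hκdef]; field_simp; ring
  have hκgt : 1 < κ := by
    have : (0:ℝ) < κ - 1 := hκ1 ▸ div_pos (mul_pos hS hDS) hP
    linarith
  -- the vectors
  set c : ℝ := Real.sqrt ((d:ℝ) / ((s:ℝ) * ((d:ℝ) - (s:ℝ)))) with hcdef
  have hc2 : c ^ 2 = (d:ℝ) / ((s:ℝ) * ((d:ℝ) - (s:ℝ))) := by
    rw [hcdef, Real.sq_sqrt (le_of_lt (div_pos hD (mul_pos hS hDS)))]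
  set w : {A : Finset (Fin d) // A.card = s} → EuclideanSpace ℝ (Fin d) :=
    fun A => WithLp.toLp 2 (fun i => c * ((if i ∈ A.1 then (1:ℝ) else 0) - (s:ℝ)/(d:ℝ))) with hwdef
  have key : ∀ A B : {A : Finset (Fin d) // A.card = s},
      ∑ i : Fin d, w A i * w B i
        = (((A.1 ∩ B.1).card : ℝ) - (s:ℝ)^2/(d:ℝ)) * ((d:ℝ) / ((s:ℝ) * ((d:ℝ) - (s:ℝ)))) := by
    intro A B
    have : ∀ i : Fin d, w A i * w B i
        = c ^ 2 * (((if i ∈ A.1 then (1:ℝ) else 0) - (s:ℝ)/(d:ℝ))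
            * ((if i ∈ B.1 then (1:ℝ) else 0) - (s:ℝ)/(d:ℝ))) := by
      intro i; rw [hwdef]; simp only [WithLp.ofLp_toLp]; ring
    simp_rw [this]
    rw [← Finset.mul_sum, sum_centered, A.2, B.2, hc2]
    have hdne : (d:ℝ) ≠ 0 := ne_of_gt hD
    field_simp
    ring
  apply csInf_le
  · exact ⟨1, fun x hx => le_of_lt hx.1⟩
  refine ⟨hκgt, d, w, ?_, ?_⟩
  · intro A
    rw [EuclideanSpace.norm_eq]
    have : ∑ i : Fin d, ‖w A i‖ ^ 2 = ∑ i : Fin d, w A i * w A i := by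
      apply Finset.sum_congr rfl; intro i _
      rw [Real.norm_eq_abs, sq_abs, sq]
    rw [this, key A A, Finset.inter_self, A.2]
    have hdne : (d:ℝ) ≠ 0 := ne_of_gt hD
    have hsne : (s:ℝ) ≠ 0 := ne_of_gt hS
    have hdsne : (d:ℝ) - (s:ℝ) ≠ 0 := ne_of_gt hDS
    have : ((s:ℝ) - (s:ℝ)^2/(d:ℝ)) * ((d:ℝ) / ((s:ℝ) * ((d:ℝ) - (s:ℝ)))) = 1 := by
      field_simp
    rw [this, Real.sqrt_one]
  · intro u v hadj
    have hm : (((u.1 ∩ v.1).card : ℝ)) ≤ (t:ℝ) := by exact_mod_cast hadj.2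
    have hinner : (inner ℝ (w u) (w v) : ℝ) = ∑ i : Fin d, w u i * w v i := by
      simp [PiLp.inner_apply, RCLike.inner_apply, conj_trivial, mul_comm]
    rw [hinner, key u v]
    have hpos : (0:ℝ) < (d:ℝ) / ((s:ℝ) * ((d:ℝ) - (s:ℝ))) := div_pos hD (mul_pos hS hDS)
    have step : (((u.1 ∩ v.1).card : ℝ) - (s:ℝ)^2/(d:ℝ)) * ((d:ℝ) / ((s:ℝ) * ((d:ℝ) - (s:ℝ))))
        ≤ ((t:ℝ) - (s:ℝ)^2/(d:ℝ)) * ((d:ℝ) / ((s:ℝ) * ((d:ℝ) - (s:ℝ)))) := by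
      apply mul_le_mul_of_nonneg_right (by linarith) (le_of_lt hpos)
    refine step.trans (le_of_eq ?_)
    rw [hκ1]
    have hdne : (d:ℝ) ≠ 0 := ne_of_gt hD
    have hsne : (s:ℝ) ≠ 0 := ne_of_gt hS
    have hdsne : (s:ℝ) * ((d:ℝ) - (s:ℝ)) ≠ 0 := ne_of_gt (mul_pos hS hDS)
    have hpne : (s:ℝ)^2 - (d:ℝ)*(t:ℝ) ≠ 0 := ne_of_gt hP
    field_simp
    ring
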